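/- Let G be a topological group such that for every identity neighborhood U ⊆ G there exists a countable set C ⊆ G with U ∪ C generating G as a group. If A ⊆ G is coarsely bounded in G, then A satisfies Rosendal's criterion: for every identity neighborhood U ⊆ G there exist a finite subset F ⊆ G and k ∈ ℕ such that every a ∈ A can be written as a product a = f₁u₁⋯f_ℓu_ℓ with ℓ ≤ k, f_i ∈ F and u_i ∈ U. -/

import Mathlib

open Pointwise

/-- A continuous, left-invariant pseudometric on a topological group `G`. -/
structure IsContLeftInvPseudometric (G : Type*) [Group G] [TopologicalSpace G]
    (d : G → G → ℝ) : Prop where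
  continuous : Continuous fun p : G × G => d p.1 p.2
  self : ∀ x : G, d x x = 0
  symm : ∀ x y : G, d x y = d y x
  nonneg : ∀ x y : G, 0 ≤ d x y
  triangle : ∀ x y z : G, d x z ≤ d x y + d y z
  left_inv : ∀ g x y : G, d (g * x) (g * y) = d x y

/-- A subset `A` of a topological group `G` is coarsely bounded in `G` if it has
finite diameter with respect to every continuous left-invariant pseudometric on `G`. -/
def IsCoarselyBounded (G : Type*) [Group G] [TopologicalSpace G] (A : Set G) : Prop :=
  ∀ d : G → G → ℝ, IsContLeftInvPseudometric G d →
    ∃ M : ℝ, ∀ a ∈ A, ∀ b ∈ A, d a b ≤ M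

/-- The word length of `g` with respect to a generating set `S`: the least `n` such
that `g` is a product of `n` elements of `S`. -/
noncomputable def wordLength {G : Type*} [Group G] (S : Set G) (g : G) : ℕ :=
  sInf {n : ℕ | ∃ l : List G, l.length = n ∧ (∀ s ∈ l, s ∈ S) ∧ l.prod = g}

/-- `G` admits a geometry if there is a continuous left-invariant pseudometric on `G`
which dominates, in the coarse Lipschitz sense, every continuous left-invariant
pseudometric on `G`. -/
def AdmitsAGeometry (G : Type*) [Group G] [TopologicalSpace G] : Prop :=
  ∃ d : G → G → ℝ, IsContLeftInvPseudometric G d ∧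
    ∀ d' : G → G → ℝ, IsContLeftInvPseudometric G d' →
      ∃ L K : ℝ, 0 < L ∧ 0 ≤ K ∧ ∀ g h : G, d' g h ≤ L * d g h + K

namespace RosendalAux

open Set

variable {G : Type*} [Group G]

/-- Increasing sequence of symmetric generating sets. -/
def upSeq (V : Set G) (c : ℕ → G) : ℕ → Set G
  | 0 => V
  | n + 1 => upSeq V c n * upSeq V c n * upSeq V c n ∪ ((c n • V) ∪ (c n • V)⁻¹)

variable {V : Set G} {c : ℕ → G}

lemma one_mem_upSeq (h1 : (1:G) ∈ V) (n : ℕ) : (1:G) ∈ upSeq V c n := by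
  induction n with
  | zero => exact h1
  | succ n ih =>
      exact Set.mem_union_left _ (by simpa using Set.mul_mem_mul (Set.mul_mem_mul ih ih) ih)

lemma upSeq_inv (hs : V⁻¹ = V) (n : ℕ) : (upSeq V c n)⁻¹ = upSeq V c n := by
  induction n with
  | zero => exact hs
  | succ n ih =>
      show (upSeq V c n * upSeq V c n * upSeq V c n ∪ ((c n • V) ∪ (c n • V)⁻¹))⁻¹ = _
      rw [Set.union_inv, Set.union_inv, mul_inv_rev, mul_inv_rev, ih, inv_inv,
        ← mul_assoc, Set.union_comm ((c n • V)⁻¹) (c n • V)]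
      rfl

lemma upSeq_cube (n : ℕ) :
    upSeq V c n * upSeq V c n * upSeq V c n ⊆ upSeq V c (n + 1) :=
  Set.subset_union_left

lemma upSeq_succ_self (h1 : (1:G) ∈ V) (n : ℕ) : upSeq V c n ⊆ upSeq V c (n + 1) := by
  intro g hg
  have h := one_mem_upSeq (c := c) h1 n
  have : (1:G) * 1 * g ∈ upSeq V c n * upSeq V c n * upSeq V c n :=
    Set.mul_mem_mul (Set.mul_mem_mul h h) hg
  simpa using upSeq_cube n this

lemma upSeq_mono (h1 : (1:G) ∈ V) {m n : ℕ} (h : m ≤ n) : upSeq V c m ⊆ upSeq V c n := by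
  induction n with
  | zero => simp [Nat.le_zero.mp h]
  | succ n ih =>
      rcases Nat.lt_or_ge m (n+1) with h' | h'
      · exact (ih (Nat.lt_succ_iff.mp h')).trans (upSeq_succ_self h1 n)
      · have : m = n + 1 := le_antisymm h h'
        simp [this]

lemma exists_mem_upSeq (h1 : (1:G) ∈ V) (hs : V⁻¹ = V)
    (hgen : Subgroup.closure (V ∪ Set.range c) = ⊤) (g : G) :
    ∃ n, g ∈ upSeq V c n := by
  have hg : g ∈ Subgroup.closure (V ∪ Set.range c) := by rw [hgen]; trivial
  induction hg using Subgroup.closure_induction with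
  | mem s hs' =>
      rcases hs' with hs' | hs'
      · exact ⟨0, hs'⟩
      · rcases hs' with ⟨j, rfl⟩
        refine ⟨j + 1, Set.mem_union_right _ (Set.mem_union_left _ ?_)⟩
        exact ⟨1, h1, by simp⟩
  | one => exact ⟨0, h1⟩
  | mul x y _ _ hx hy =>
      rcases hx with ⟨m, hm⟩
      rcases hy with ⟨n, hn⟩
      refine ⟨max m n + 1, upSeq_cube _ ?_⟩
      have h := one_mem_upSeq (c := c) h1 (max m n)
      have : (1:G) * x * y ∈ _ := Set.mul_mem_mul (Set.mul_mem_mul h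
        (upSeq_mono h1 (le_max_left m n) hm)) (upSeq_mono h1 (le_max_right m n) hn)
      simpa using this
  | inv x _ hx =>
      rcases hx with ⟨n, hn⟩
      exact ⟨n, by rw [← upSeq_inv (c := c) hs n]; exact Set.inv_mem_inv.mpr hn⟩

/-- Every element of `upSeq V c n` is a product of at most `3 ^ n` generators. -/
lemma upSeq_word (h1 : (1:G) ∈ V) (n : ℕ) :
    ∀ g ∈ upSeq V c n, ∃ l : List G, l.length ≤ 3 ^ n ∧
      (∀ s ∈ l, s ∈ V ∪ ⋃ j ∈ Finset.range n, ((c j • V) ∪ (c j • V)⁻¹)) ∧ l.prod = g := by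
  induction n with
  | zero =>
      intro g hg
      refine ⟨[g], by simp, ?_, by simp⟩
      intro s hsl
      simp only [List.mem_singleton] at hsl
      subst hsl
      exact Set.mem_union_left _ hg
  | succ n ih =>
      intro g hg
      have hsub : (V ∪ ⋃ j ∈ Finset.range n, ((c j • V) ∪ (c j • V)⁻¹)) ⊆
          V ∪ ⋃ j ∈ Finset.range (n+1), ((c j • V) ∪ (c j • V)⁻¹) := by
        apply Set.union_subset_union_right
        intro x hx
        rcases Set.mem_iUnion₂.mp hx with ⟨j, hj, hxj⟩
        refine Set.mem_iUnion₂.mpr ⟨j, ?_, hxj⟩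
        simp only [Finset.mem_range] at hj ⊢
        omega
      rcases hg with hg | hg
      · rcases hg with ⟨xy, hxy, z, hz, rfl⟩
        rcases hxy with ⟨x, hx, y, hy, rfl⟩
        rcases ih x hx with ⟨lx, hlx, hmx, hpx⟩
        rcases ih y hy with ⟨ly, hly, hmy, hpy⟩
        rcases ih z hz with ⟨lz, hlz, hmz, hpz⟩
        refine ⟨lx ++ ly ++ lz, ?_, ?_, by simp [hpx, hpy, hpz, mul_assoc]⟩
        · simp only [List.length_append]
          calc lx.length + ly.length + lz.length ≤ 3^n + 3^n + 3^n := by omega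
          _ = 3 ^ (n+1) := by ring
        · intro s hsl
          simp only [List.mem_append] at hsl
          rcases hsl with (hsl | hsl) | hsl
          · exact hsub (hmx s hsl)
          · exact hsub (hmy s hsl)
          · exact hsub (hmz s hsl)
      · refine ⟨[g], by simp [Nat.one_le_iff_ne_zero], ?_, by simp⟩
        intro s hsl
        simp only [List.mem_singleton] at hsl
        subst hsl
        exact Set.mem_union_right _ (Set.mem_iUnion₂.mpr ⟨n, by simp, hg⟩)
section Top

variable [TopologicalSpace G] [IsTopologicalGroup G]

lemma exists_symm_cube {S : Set G} (hS : S ∈ nhds 1) :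
    ∃ T : Set G, IsOpen T ∧ (1:G) ∈ T ∧ T⁻¹ = T ∧ T * T * T ⊆ S := by
  rcases exists_open_nhds_one_mul_subset hS with ⟨V₁, hV₁o, hV₁1, hV₁⟩
  rcases exists_open_nhds_one_mul_subset (hV₁o.mem_nhds hV₁1) with ⟨V₂, hV₂o, hV₂1, hV₂⟩
  have h21 : V₂ ⊆ V₁ := fun x hx => by simpa using hV₂ (Set.mul_mem_mul hx hV₂1)
  refine ⟨V₂ ∩ V₂⁻¹, hV₂o.inter hV₂o.inv, ⟨hV₂1, by simpa using hV₂1⟩,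
    by rw [Set.inter_inv, inv_inv, Set.inter_comm], ?_⟩
  calc V₂ ∩ V₂⁻¹ * (V₂ ∩ V₂⁻¹) * (V₂ ∩ V₂⁻¹)
      ⊆ V₂ * V₂ * V₂ := by
        refine Set.mul_subset_mul (Set.mul_subset_mul ?_ ?_) ?_ <;> exact Set.inter_subset_left
    _ ⊆ V₁ * V₂ := Set.mul_subset_mul_right hV₂
    _ ⊆ V₁ * V₁ := Set.mul_subset_mul_left h21
    _ ⊆ S := hV₁

lemma exists_downSeq {V : Set G} (hVo : IsOpen V) (h1 : (1:G) ∈ V) (hs : V⁻¹ = V) :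
    ∃ W : ℕ → Set G, W 0 = V ∧ (∀ n, IsOpen (W n)) ∧ (∀ n, (1:G) ∈ W n) ∧
      (∀ n, (W n)⁻¹ = W n) ∧ ∀ n, W (n+1) * W (n+1) * W (n+1) ⊆ W n := by
  have step : ∀ p : {S : Set G // IsOpen S ∧ (1:G) ∈ S ∧ S⁻¹ = S},
      ∃ q : {S : Set G // IsOpen S ∧ (1:G) ∈ S ∧ S⁻¹ = S}, q.1 * q.1 * q.1 ⊆ p.1 := by
    intro p
    rcases exists_symm_cube (p.2.1.mem_nhds p.2.2.1) with ⟨T', h1', h2', h3', h4'⟩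
    exact ⟨⟨T', h1', h2', h3'⟩, h4'⟩
  choose f hf using step
  refine ⟨fun n => (f^[n] ⟨V, hVo, h1, hs⟩).1, rfl, fun n => (f^[n] _).2.1,
    fun n => (f^[n] _).2.2.1, fun n => (f^[n] _).2.2.2, fun n => ?_⟩
  simp only []
  rw [Function.iterate_succ_apply' f n _]
  exact hf _

end Top
section Metric

open NNReal

variable [TopologicalSpace G] [IsTopologicalGroup G]

lemma nnreal_eq_zero_of_forall_le_zpow {x : ℝ≥0} (h : ∀ n : ℤ, x ≤ 2 ^ n) : x = 0 := by
  by_contra hx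
  have hx' : 0 < (x:ℝ) := by positivity
  obtain ⟨m, hm⟩ := exists_pow_lt_of_lt_one hx' (by norm_num : (2:ℝ)⁻¹ < 1)
  have h2 : ((2:ℝ≥0) ^ (-(m:ℤ)) : ℝ) = (2:ℝ)⁻¹ ^ m := by
    push_cast
    rw [zpow_neg, zpow_natCast, inv_pow]
  have h3 := h (-(m:ℤ))
  have h4 : (x:ℝ) ≤ ((2:ℝ≥0) ^ (-(m:ℤ)) : ℝ) := NNReal.coe_le_coe.mpr h3
  rw [h2] at h4
  linarith

lemma exists_pseudometric {V : Set G} (hVo : IsOpen V) (h1V : (1:G) ∈ V) (hVs : V⁻¹ = V)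
    (c : ℕ → G) (hgen : Subgroup.closure (V ∪ Set.range c) = ⊤) :
    ∃ d : G → G → ℝ, IsContLeftInvPseudometric G d ∧
      ∀ R : ℝ, ∃ n : ℕ, ∀ g : G, d 1 g ≤ R → g ∈ upSeq V c n := by
  classical
  obtain ⟨W, hW0, hWo, hW1, hWs, hWc⟩ := exists_downSeq hVo h1V hVs
  -- the ℤ-indexed family
  set E : ℤ → Set G := fun n => if 0 ≤ n then upSeq V c n.toNat else W (-n).toNat with hE
  have hEone : ∀ n : ℤ, (1:G) ∈ E n := by
    intro n
    by_cases h : 0 ≤ n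
    · simp only [hE, if_pos h]; exact one_mem_upSeq h1V _
    · simp only [hE, if_neg h]; exact hW1 _
  have hEsymm : ∀ n : ℤ, (E n)⁻¹ = E n := by
    intro n
    by_cases h : 0 ≤ n
    · simp only [hE, if_pos h]; exact upSeq_inv hVs _
    · simp only [hE, if_neg h]; exact hWs _
  have hEcube : ∀ n : ℤ, E n * E n * E n ⊆ E (n + 1) := by
    intro n
    by_cases h : 0 ≤ n
    · have h1 : (0:ℤ) ≤ n + 1 := by omega
      have h2 : (n + 1).toNat = n.toNat + 1 := by omega
      simp only [hE, if_pos h, if_pos h1, h2]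
      exact upSeq_cube _
    · by_cases h2 : n = -1
      · subst h2
        have : ((-(-1:ℤ)).toNat) = 1 := by norm_num
        simp only [hE, if_neg h, if_pos (by norm_num : (0:ℤ) ≤ -1 + 1), this]
        norm_num
        calc W 1 * W 1 * W 1 ⊆ W 0 := hWc 0
          _ = upSeq V c (-1 + 1 : ℤ).toNat := by norm_num [hW0]; rfl
      · have h3 : ¬ (0:ℤ) ≤ n + 1 := by omega
        have h4 : (-n).toNat = (-(n+1)).toNat + 1 := by omega
        simp only [hE, if_neg h, if_neg h3, h4]
        exact hWc _
  have hEmonoSucc : ∀ n : ℤ, E n ⊆ E (n + 1) := by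
    intro n g hg
    have h := hEone n
    have : (1:G) * 1 * g ∈ E n * E n * E n := Set.mul_mem_mul (Set.mul_mem_mul h h) hg
    simpa using hEcube n this
  have hEmono : ∀ {m n : ℤ}, m ≤ n → E m ⊆ E n := by
    intro m n h
    exact Int.le_induction (motive := fun k _ => E m ⊆ E k) subset_rfl
      (fun k _ ih => ih.trans (hEmonoSucc k)) n h
  have hcover : ∀ g : G, ∃ n : ℤ, g ∈ E n := by
    intro g
    obtain ⟨k, hk⟩ := exists_mem_upSeq h1V hVs hgen g
    exact ⟨(k:ℤ), by simp [hE, hk]⟩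
  -- the gauge
  set rho : G → ℝ≥0 := fun g => sInf ((fun n : ℤ => (2:ℝ≥0) ^ n) '' {n | g ∈ E n}) with hrho
  have hρle : ∀ {g : G} {n : ℤ}, g ∈ E n → rho g ≤ 2 ^ n := by
    intro g n hn
    exact csInf_le (OrderBot.bddBelow _) ⟨n, hn, rfl⟩
  have hρzero : ∀ {g : G}, (∀ n : ℤ, g ∈ E n) → rho g = 0 := by
    intro g hg
    exact nnreal_eq_zero_of_forall_le_zpow fun n => hρle (hg n)
  have hρmem : ∀ {g : G} {k : ℤ}, rho g ≤ 2 ^ k → g ∈ E k := by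
    intro g k hk
    by_contra hgk
    have hlow : ∀ n ∈ {n : ℤ | g ∈ E n}, k + 1 ≤ n := by
      intro n hn
      by_contra hn'
      exact hgk (hEmono (by omega) hn)
    have h1 : (2:ℝ≥0) ^ (k+1) ≤ rho g := by
      refine le_csInf ?_ ?_
      · obtain ⟨n, hn⟩ := hcover g
        exact ⟨_, ⟨n, hn, rfl⟩⟩
      · rintro _ ⟨m, hm, rfl⟩
        exact zpow_le_zpow_right₀ one_le_two (hlow m hm)
    have h2 : (2:ℝ≥0) ^ k < 2 ^ (k+1) := by
      rw [zpow_add_one₀ two_ne_zero]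
      have hpos : (0:ℝ≥0) < 2 ^ k := zpow_pos two_pos _
      exact lt_mul_of_one_lt_right hpos one_lt_two
    exact absurd (h1.trans hk) (not_le.mpr h2)
  have hρinv : ∀ g : G, rho g⁻¹ = rho g := by
    intro g
    have hmeminv : ∀ (n : ℤ) (g : G), g ∈ E n → g⁻¹ ∈ E n := by
      intro n g h
      rw [← hEsymm n]
      exact Set.inv_mem_inv.mpr h
    have : {n : ℤ | g⁻¹ ∈ E n} = {n : ℤ | g ∈ E n} := by
      ext n
      exact ⟨fun h => by simpa using hmeminv n _ h, fun h => hmeminv n g h⟩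
    simp only [hrho, this]
  have hρpos : ∀ {g : G}, 0 < rho g → ∃ k : ℤ, rho g = 2 ^ k := by
    intro g hg
    have hbdd : ∃ b : ℤ, ∀ z : ℤ, g ∈ E z → b ≤ z := by
      by_contra hb
      push_neg at hb
      have hle : ∀ n : ℤ, rho g ≤ 2 ^ n := by
        intro n
        obtain ⟨z, hz, hzn⟩ := hb n
        exact (hρle hz).trans (zpow_le_zpow_right₀ one_le_two hzn.le)
      exact absurd (nnreal_eq_zero_of_forall_le_zpow hle) hg.ne'
    obtain ⟨b, hb⟩ := hbdd
    obtain ⟨lb, hlb, hleast⟩ := Int.exists_least_of_bdd (P := fun z => g ∈ E z) ⟨b, hb⟩ (hcover g)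
    refine ⟨lb, le_antisymm (hρle hlb) ?_⟩
    refine le_csInf ⟨_, ⟨lb, hlb, rfl⟩⟩ ?_
    rintro _ ⟨m, hm, rfl⟩
    exact zpow_le_zpow_right₀ one_le_two (hleast m hm)
  -- the key weak-triangle inequality
  have hkey : ∀ x y z : G, rho (x * y * z) ≤ 2 * max (rho x) (max (rho y) (rho z)) := by
    intro x y z
    set M := max (rho x) (max (rho y) (rho z)) with hM
    rcases eq_zero_or_pos M with hM0 | hMpos
    · have hx : rho x = 0 := le_antisymm (le_of_le_of_eq (le_max_left _ _) hM0) zero_le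
      have hy : rho y = 0 := le_antisymm (le_of_le_of_eq
        ((le_max_left _ _).trans (le_max_right _ _)) hM0) zero_le
      have hz : rho z = 0 := le_antisymm (le_of_le_of_eq
        ((le_max_right _ _).trans (le_max_right _ _)) hM0) zero_le
      have hall : ∀ n : ℤ, x * y * z ∈ E n := by
        intro n
        have hx' : x ∈ E (n-1) := hρmem (by rw [hx]; exact zero_le)
        have hy' : y ∈ E (n-1) := hρmem (by rw [hy]; exact zero_le)
        have hz' : z ∈ E (n-1) := hρmem (by rw [hz]; exact zero_le)
        have := hEcube (n-1) (Set.mul_mem_mul (Set.mul_mem_mul hx' hy') hz')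
        simpa using this
      rw [hM0, hρzero hall]
      simp
    · obtain ⟨k, hk⟩ : ∃ k : ℤ, M = 2 ^ k := by
      -- M is one of the three values
        have h3 : M = rho x ∨ M = rho y ∨ M = rho z := by
          rcases max_choice (rho x) (max (rho y) (rho z)) with h | h
          · exact Or.inl h
          · rcases max_choice (rho y) (rho z) with h' | h'
            · exact Or.inr (Or.inl (h.trans h'))
            · exact Or.inr (Or.inr (h.trans h'))
        rcases h3 with h | h | h
        · obtain ⟨k, hk⟩ := hρpos (h ▸ hMpos); exact ⟨k, h.trans hk⟩
        · obtain ⟨k, hk⟩ := hρpos (h ▸ hMpos); exact ⟨k, h.trans hk⟩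
        · obtain ⟨k, hk⟩ := hρpos (h ▸ hMpos); exact ⟨k, h.trans hk⟩
      have hx : x ∈ E k := hρmem ((le_max_left _ _).trans (le_of_eq hk))
      have hy : y ∈ E k := hρmem (((le_max_left _ _).trans (le_max_right _ _)).trans
        (le_of_eq hk))
      have hz : z ∈ E k := hρmem (((le_max_right _ _).trans (le_max_right _ _)).trans
        (le_of_eq hk))
      have hin := hEcube k (Set.mul_mem_mul (Set.mul_mem_mul hx hy) hz)
      calc rho (x * y * z) ≤ 2 ^ (k+1) := hρle hin
        _ = 2 * 2 ^ k := by rw [zpow_add_one₀ two_ne_zero, mul_comm]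
        _ = 2 * M := by rw [hk]
  -- the premetric and the associated chain metric
  have hρone : rho 1 = 0 := hρzero fun n => hEone n
  set D : G → G → ℝ≥0 := fun x y => rho (x⁻¹ * y) with hD
  have hDself : ∀ x : G, D x x = 0 := by
    intro x; simp only [hD, inv_mul_cancel, hρone]
  have hDcomm : ∀ x y : G, D x y = D y x := by
    intro x y
    simp only [hD]
    have h : (x⁻¹ * y)⁻¹ = y⁻¹ * x := by group
    rw [← hρinv (x⁻¹ * y), h]
  set dd : G → G → ℝ := fun x y =>
    @dist G (PseudoMetricSpace.ofPreNNDist D hDself hDcomm).toDist x y with hdd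
  have hdd_self : ∀ x, dd x x = 0 :=
    fun x => @dist_self G (PseudoMetricSpace.ofPreNNDist D hDself hDcomm) x
  have hdd_comm : ∀ x y, dd x y = dd y x :=
    fun x y => @dist_comm G (PseudoMetricSpace.ofPreNNDist D hDself hDcomm) x y
  have hdd_tri : ∀ x y z, dd x z ≤ dd x y + dd y z :=
    fun x y z => @dist_triangle G (PseudoMetricSpace.ofPreNNDist D hDself hDcomm) x y z
  have hdd_nonneg : ∀ x y, 0 ≤ dd x y :=
    fun x y => @dist_nonneg G (PseudoMetricSpace.ofPreNNDist D hDself hDcomm) x y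
  have hdd_le : ∀ x y, dd x y ≤ (D x y : ℝ) :=
    fun x y => PseudoMetricSpace.dist_ofPreNNDist_le D hDself hDcomm x y
  have hD_le : ∀ x y, (D x y : ℝ) ≤ 2 * dd x y := by
    intro x y
    refine PseudoMetricSpace.le_two_mul_dist_ofPreNNDist D hDself hDcomm ?_ x y
    intro x₁ x₂ x₃ x₄
    have hx : x₁⁻¹ * x₄ = (x₁⁻¹ * x₂) * (x₂⁻¹ * x₃) * (x₃⁻¹ * x₄) := by group
    simp only [hD]
    rw [hx]
    exact hkey _ _ _
  -- left invariance
  have hdd_inv : ∀ g x y : G, dd (g * x) (g * y) = dd x y := by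
    intro g x y
    simp only [hdd]
    rw [PseudoMetricSpace.dist_ofPreNNDist, PseudoMetricSpace.dist_ofPreNNDist]
    refine congrArg _ ?_
    refine (Function.Surjective.iInf_congr (List.map (fun t => g * t)) ?_ ?_).symm
    · exact List.map_surjective_iff.mpr fun z => ⟨g⁻¹ * z, by group⟩
    · intro l
      have h1 : (g * x) :: List.map (fun t => g * t) l
          = List.map (fun t => g * t) (x :: l) := rfl
      have h2 : List.map (fun t => g * t) l ++ [g * y]
          = List.map (fun t => g * t) (l ++ [y]) := by simp
      rw [h1, h2, List.zipWith_map]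
      have h3 : (fun a b => D (g * a) (g * b)) = D := by
        funext a b
        simp only [hD]
        have : (g * a)⁻¹ * (g * b) = a⁻¹ * b := by group
        rw [this]
      rw [h3]
  -- continuity
  have hcont : Continuous fun p : G × G => dd p.1 p.2 := by
    rw [continuous_iff_continuousAt]
    rintro ⟨x₀, y₀⟩
    refine Metric.tendsto_nhds.mpr ?_
    intro ε hε
    obtain ⟨n, hn⟩ : ∃ n : ℕ, ((2:ℝ≥0) ^ (-(n:ℤ)) : ℝ) < ε / 2 := by
      obtain ⟨n, hn⟩ := exists_pow_lt_of_lt_one (by positivity : (0:ℝ) < ε/2)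
        (by norm_num : (2:ℝ)⁻¹ < 1)
      refine ⟨n, ?_⟩
      have hc : ((2:ℝ≥0) ^ (-(n:ℤ)) : ℝ) = (2:ℝ)⁻¹ ^ n := by
        push_cast
        rw [zpow_neg, zpow_natCast, inv_pow]
      rw [hc]; exact hn
    set N : Set G := W (n+1) with hN
    have hNE : N = E (-(n:ℤ) - 1) := by
      have ht : (-(-(n:ℤ) - 1)).toNat = n + 1 := by omega
      simp only [hE, if_neg (by omega : ¬ (0:ℤ) ≤ -(n:ℤ) - 1), ht, hN]
    have hNρ : ∀ h : G, h ∈ N → (rho h : ℝ) < ε / 2 := by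
      intro h hh
      have h1 : rho h ≤ 2 ^ (-(n:ℤ) - 1) := hρle (hNE ▸ hh)
      have h2 : (2:ℝ≥0) ^ (-(n:ℤ) - 1) ≤ 2 ^ (-(n:ℤ)) :=
        zpow_le_zpow_right₀ one_le_two (by omega)
      calc (rho h : ℝ) ≤ ((2:ℝ≥0) ^ (-(n:ℤ)) : ℝ) := by exact_mod_cast h1.trans h2
        _ < ε / 2 := hn
    have hmem : {p : G × G | p.1 ∈ x₀ • N ∧ p.2 ∈ y₀ • N} ∈ nhds (x₀, y₀) := by
      have hNo : IsOpen N := hWo (n+1)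
      have hx : x₀ • N ∈ nhds x₀ :=
        (hNo.smul x₀).mem_nhds
          (by simpa using Set.smul_mem_smul_set (a := x₀) (hW1 (n+1)))
      have hy : y₀ • N ∈ nhds y₀ :=
        (hNo.smul y₀).mem_nhds
          (by simpa using Set.smul_mem_smul_set (a := y₀) (hW1 (n+1)))
      rw [nhds_prod_eq]
      exact Filter.prod_mem_prod hx hy
    refine Filter.mem_of_superset hmem ?_
    rintro ⟨x, y⟩ ⟨hx, hy⟩
    have key : ∀ (a b : G), b ∈ a • N → dd b a < ε / 2 := by
      rintro a b ⟨w, hw, rfl⟩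
      have h1 : dd (a • w) a ≤ (D (a • w) a : ℝ) := hdd_le _ _
      have h2 : (a • w)⁻¹ * a = w⁻¹ := by
        simp only [smul_eq_mul]; group
      have h3 : D (a • w) a = rho w := by
        simp only [hD, h2, hρinv]
      rw [h3] at h1
      exact lt_of_le_of_lt h1 (hNρ w hw)
    have e1 : dd x x₀ < ε / 2 := key x₀ x hx
    have e2 : dd y y₀ < ε / 2 := key y₀ y hy
    have t1 : dd x y ≤ dd x x₀ + dd x₀ y₀ + dd y₀ y :=
      (hdd_tri x x₀ y).trans (by linarith [hdd_tri x₀ y₀ y])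
    have t2 : dd x₀ y₀ ≤ dd x₀ x + dd x y + dd y y₀ :=
      (hdd_tri x₀ x y₀).trans (by linarith [hdd_tri x y y₀])
    have c1 : dd x₀ x = dd x x₀ := hdd_comm _ _
    have c2 : dd y₀ y = dd y y₀ := hdd_comm _ _
    show dist (dd x y) (dd x₀ y₀) < ε
    rw [Real.dist_eq, abs_sub_lt_iff]
    constructor <;> [linarith; linarith]
  -- conclusion
  refine ⟨dd, ⟨hcont, hdd_self, hdd_comm, hdd_nonneg, hdd_tri, hdd_inv⟩, ?_⟩
  intro R
  obtain ⟨m, hm⟩ := exists_nat_gt (2 * R)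
  refine ⟨m, fun g hg => ?_⟩
  have h1 : (D 1 g : ℝ) ≤ 2 * R := (hD_le 1 g).trans (by linarith)
  have h2 : (2:ℝ) * R ≤ ((2:ℝ≥0) ^ ((m:ℕ) : ℤ) : ℝ) := by
    have hmp : (m:ℝ) ≤ 2 ^ m := by exact_mod_cast (Nat.lt_two_pow_self (n := m)).le
    have hcast : ((2:ℝ≥0) ^ ((m:ℕ) : ℤ) : ℝ) = 2 ^ m := by
      push_cast
      rw [zpow_natCast]
    rw [hcast]
    linarith
  have h3 : D 1 g ≤ 2 ^ ((m:ℕ) : ℤ) := by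
    rw [← NNReal.coe_le_coe]
    exact h1.trans h2
  have h4 : g ∈ E ((m:ℕ) : ℤ) := by
    have hDg : D 1 g = rho g := by simp [hD]
    exact hρmem (hDg ▸ h3)
  have h5 : ((m:ℤ)).toNat = m := by omega
  simpa only [hE, if_pos (by positivity : (0:ℤ) ≤ (m:ℤ)), h5] using h4

end Metric
lemma exists_pairs {F : Finset G} {U : Set G} (l : List G)
    (h : ∀ s ∈ l, ∃ ps : List (G × G), ps.length ≤ 2 ∧ (∀ p ∈ ps, p.1 ∈ F ∧ p.2 ∈ U) ∧
      (ps.map fun p => p.1 * p.2).prod = s) :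
    ∃ L : List (G × G), L.length ≤ 2 * l.length ∧ (∀ p ∈ L, p.1 ∈ F ∧ p.2 ∈ U) ∧
      (L.map fun p => p.1 * p.2).prod = l.prod := by
  induction l with
  | nil => exact ⟨[], by simp, by simp, by simp⟩
  | cons s l ih =>
      obtain ⟨ps, hps1, hps2, hps3⟩ := h s (List.mem_cons_self)
      obtain ⟨L, hL1, hL2, hL3⟩ := ih fun t ht => h t (List.mem_cons_of_mem s ht)
      refine ⟨ps ++ L, ?_, ?_, ?_⟩
      · simp only [List.length_append, List.length_cons]; omega
      · intro p hp
        rcases List.mem_append.mp hp with h' | h'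
        exacts [hps2 p h', hL2 p h']
      · simp [hps3, hL3]

end RosendalAux

/-- If `G` is countably generated over every identity neighborhood, then every
coarsely bounded subset of `G` satisfies Rosendal's criterion. -/
theorem rosendal_criterion_of_isCoarselyBounded {G : Type*} [Group G] [TopologicalSpace G]
    [IsTopologicalGroup G]
    (hG : ∀ U ∈ nhds (1 : G), ∃ C : Set G, C.Countable ∧ Subgroup.closure (U ∪ C) = ⊤)
    (A : Set G) (hA : IsCoarselyBounded G A) :
    ∀ U ∈ nhds (1 : G), ∃ (F : Finset G) (k : ℕ),
      ∀ a ∈ A, ∃ ℓ : ℕ, ℓ ≤ k ∧ ∃ f u : Fin ℓ → G,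
        (∀ i, f i ∈ F) ∧ (∀ i, u i ∈ U) ∧
        a = (List.ofFn fun i => f i * u i).prod := by
  classical
  intro U hU
  have h1U : (1:G) ∈ U := mem_of_mem_nhds hU
  rcases A.eq_empty_or_nonempty with rfl | ⟨a₀, ha₀⟩
  · exact ⟨∅, 0, by simp⟩
  obtain ⟨V₀, hV₀U, hV₀o, hV₀1⟩ := mem_nhds_iff.mp hU
  set V := V₀ ∩ V₀⁻¹ with hV
  have hVo : IsOpen V := hV₀o.inter hV₀o.inv
  have h1V : (1:G) ∈ V := ⟨hV₀1, by simpa using hV₀1⟩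
  have hVs : V⁻¹ = V := by rw [hV, Set.inter_inv, inv_inv, Set.inter_comm]
  have hVU : V ⊆ U := fun x hx => hV₀U hx.1
  obtain ⟨C, hCc, hCgen⟩ := hG V (hVo.mem_nhds h1V)
  obtain ⟨c, hc⟩ := (hCc.insert 1).exists_eq_range (Set.insert_nonempty _ _)
  have hgen : Subgroup.closure (V ∪ Set.range c) = ⊤ := by
    rw [eq_top_iff, ← hCgen]
    refine Subgroup.closure_mono ?_
    rintro x (hx | hx)
    · exact Or.inl hx
    · exact Or.inr (by rw [← hc]; exact Set.mem_insert_of_mem _ hx)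
  obtain ⟨d, hd, hball⟩ := RosendalAux.exists_pseudometric hVo h1V hVs c hgen
  obtain ⟨M, hM⟩ := hA d hd
  obtain ⟨n, hn⟩ := hball (d 1 a₀ + M)
  have hmem : ∀ a ∈ A, a ∈ RosendalAux.upSeq V c n := by
    intro a ha
    refine hn a ?_
    calc d 1 a ≤ d 1 a₀ + d a₀ a := hd.triangle _ _ _
      _ ≤ d 1 a₀ + M := by linarith [hM a₀ ha₀ a ha]
  set F' : Finset G :=
    insert 1 ((Finset.range n).image c ∪ (Finset.range n).image fun j => (c j)⁻¹) with hF'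
  refine ⟨F', 2 * 3 ^ n, ?_⟩
  intro a ha
  obtain ⟨l, hlen, hmem', hprod⟩ := RosendalAux.upSeq_word h1V n a (hmem a ha)
  have hdec : ∀ s ∈ l, ∃ ps : List (G × G), ps.length ≤ 2 ∧
      (∀ p ∈ ps, p.1 ∈ F' ∧ p.2 ∈ U) ∧ (ps.map fun p => p.1 * p.2).prod = s := by
    intro s hs
    rcases hmem' s hs with hs' | hs'
    · refine ⟨[(1, s)], by simp, ?_, by simp⟩
      rintro p hp
      simp only [List.mem_singleton] at hp
      subst hp
      exact ⟨Finset.mem_insert_self _ _, hVU hs'⟩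
    · rcases Set.mem_iUnion₂.mp hs' with ⟨j, hj, hsj⟩
      have hjF : c j ∈ F' := Finset.mem_insert_of_mem
        (Finset.mem_union_left _ (Finset.mem_image_of_mem c hj))
      have hjF' : (c j)⁻¹ ∈ F' := Finset.mem_insert_of_mem
        (Finset.mem_union_right _ (Finset.mem_image_of_mem _ hj))
      rcases hsj with hsj | hsj
      · obtain ⟨v, hv, rfl⟩ := hsj
        refine ⟨[(c j, v)], by simp, ?_, by simp⟩
        rintro p hp
        simp only [List.mem_singleton] at hp
        subst hp
        exact ⟨hjF, hVU hv⟩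
      · rw [Set.mem_inv] at hsj
        obtain ⟨v, hv, hveq⟩ := hsj
        have hseq : s = v⁻¹ * (c j)⁻¹ := by
          have h' := congrArg Inv.inv hveq
          simpa [smul_eq_mul, mul_inv_rev] using h'.symm
        have hvinv : v⁻¹ ∈ V := by rw [← hVs]; exact Set.inv_mem_inv.mpr hv
        refine ⟨[(1, v⁻¹), ((c j)⁻¹, 1)], by simp, ?_, ?_⟩
        · rintro p hp
          rcases List.mem_cons.mp hp with hp | hp
          · subst hp; exact ⟨Finset.mem_insert_self _ _, hVU hvinv⟩
          · simp only [List.mem_singleton] at hp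
            subst hp
            exact ⟨hjF', h1U⟩
        · simp [hseq]
  obtain ⟨L, hL1, hL2, hL3⟩ := RosendalAux.exists_pairs l hdec
  refine ⟨L.length, hL1.trans (by omega), fun i => (L.get i).1, fun i => (L.get i).2,
    fun i => (hL2 _ (List.get_mem L i)).1, fun i => (hL2 _ (List.get_mem L i)).2, ?_⟩
  have hofn : (List.ofFn fun i : Fin L.length => (L.get i).1 * (L.get i).2)
      = L.map fun p => p.1 * p.2 := by
    conv_rhs => rw [← List.ofFn_get L]
    rw [List.map_ofFn]
    rfl
  rw [hofn, hL3, hprod]
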